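/- arXiv:2302.13452 — 7 statements merged into one kernel-verified Lean document; each statement's English description precedes it below -/
import Mathlib

section
/- If W is a real symmetric n×n matrix with W ⪯ b·I for some b > 0, and Q_b := U θ_b(Λ) Uᵀ where W = U Λ Uᵀ is an orthogonal eigendecomposition and θ_b is applied entrywise to the diagonal of Λ, then W = Q_b - (1/(4b)) Q_b². -/
open Matrix

/-- θ_b(z) = 2b(1 + sqrt(1 - z/b)). -/
noncomputable def theta (b z : ℝ) : ℝ := 2 * b * (1 + Real.sqrt (1 - z / b))

lemma theta_identity (b z : ℝ) (hb : 0 < b) (hz : z ≤ b) :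
    theta b z - (1 / (4 * b)) * (theta b z * theta b z) = z := by
  have h1 : 0 ≤ 1 - z / b := by
    rw [sub_nonneg, div_le_one hb]; exact hz
  unfold theta
  set s := Real.sqrt (1 - z / b) with hsdef
  have hs : b * (s * s) = b - z := by
    rw [Real.mul_self_sqrt h1]; field_simp
  have hb' : b ≠ 0 := ne_of_gt hb
  field_simp
  linear_combination (-(4:ℝ)) * hs
  
theorem splitting_upper_bounded_symmetric {n : ℕ}
    (W U Λ : Matrix (Fin n) (Fin n) ℝ) (b : ℝ) (hb : 0 < b)
    (hW : W.IsSymm)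
    (hPSD : (b • (1 : Matrix (Fin n) (Fin n) ℝ) - W).PosSemidef)
    (hU1 : U * Uᵀ = 1) (hU2 : Uᵀ * U = 1)
    (hΛ : Λ.IsDiag) (hdecomp : W = U * Λ * Uᵀ)
    (Q : Matrix (Fin n) (Fin n) ℝ)
    (hQ : Q = U * Matrix.diagonal (fun i => theta b (Λ i i)) * Uᵀ) :
    W = Q - (1 / (4 * b)) • (Q * Q) := by
  have hUc : Uᵀ = Uᴴ := by
    ext i j; simp [Matrix.conjTranspose_apply, Matrix.transpose_apply]
  have hconj : (Uᵀ * (b • (1 : Matrix (Fin n) (Fin n) ℝ) - W) * U).PosSemidef := by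
    rw [hUc]; exact hPSD.conjTranspose_mul_mul_same U
  have hUL : Uᵀ * (b • (1 : Matrix (Fin n) (Fin n) ℝ) - W) * U
      = b • (1 : Matrix (Fin n) (Fin n) ℝ) - Λ := by
    rw [hdecomp, Matrix.mul_sub, Matrix.sub_mul]
    congr 1
    · rw [Matrix.mul_smul, Matrix.smul_mul, mul_one, hU2]
    · calc Uᵀ * (U * Λ * Uᵀ) * U = (Uᵀ * U) * Λ * (Uᵀ * U) := by noncomm_ring
        _ = Λ := by rw [hU2, one_mul, mul_one]
  have heig : ∀ i, Λ i i ≤ b := by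
    intro i
    have h2 := (hUL ▸ hconj).dotProduct_mulVec_nonneg (Pi.single i 1)
    simp [Matrix.mulVec_single, Matrix.one_apply, dotProduct, Pi.single_apply] at h2
    linarith
  have hΛeq : Λ = Matrix.diagonal (fun i => Λ i i) := by
    ext i j
    by_cases h : i = j
    · subst h; simp
    · simp [Matrix.diagonal_apply_ne _ h, hΛ h]
  set D := Matrix.diagonal (fun i => theta b (Λ i i)) with hD
  have hQQ : Q * Q = U * (D * D) * Uᵀ := by
    rw [hQ]
    calc (U * D * Uᵀ) * (U * D * Uᵀ) = U * (D * (Uᵀ * U) * D) * Uᵀ := by noncomm_ring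
      _ = U * (D * D) * Uᵀ := by rw [hU2, mul_one]
  have key : Matrix.diagonal (fun i => Λ i i)
      = D - (1 / (4 * b)) • (D * D) := by
    rw [hD, Matrix.diagonal_mul_diagonal]
    ext i j
    rcases eq_or_ne i j with rfl | h
    · simp only [Matrix.sub_apply, Matrix.smul_apply, Matrix.diagonal_apply_eq, smul_eq_mul]
      exact (theta_identity b (Λ i i) hb (heig i)).symm
    · simp [Matrix.diagonal_apply_ne _ h]
  rw [hdecomp, hΛeq, key, hQQ, hQ]
  simp [Matrix.mul_sub, Matrix.sub_mul, Matrix.mul_smul, Matrix.smul_mul]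
end

section
/- If S and Q are real symmetric n×n matrices with Q positive definite, then the Q^{1/2}-weighted Euclidean logarithmic norm of A := SQ equals its spectral abscissa; that is, λ_max((Q A Q^{-1} + Aᵀ)/2) = α(A). -/
open Matrix

/-- Maximum real part of the (complex) eigenvalues. -/
noncomputable def lambdaMax {n : ℕ} (A : Matrix (Fin n) (Fin n) ℝ) : ℝ :=
  sSup (Complex.re '' spectrum ℂ (A.map (algebraMap ℝ ℂ)))

/-- Spectral abscissa: maximum real part of the (complex) eigenvalues. -/
noncomputable def specAbscissa {n : ℕ} (A : Matrix (Fin n) (Fin n) ℝ) : ℝ :=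
  sSup (Complex.re '' spectrum ℂ (A.map (algebraMap ℝ ℂ)))

theorem weighted_lognorm_eq_specAbscissa {n : ℕ} (S Q : Matrix (Fin n) (Fin n) ℝ)
    (hS : S.IsSymm) (hQ : Q.IsSymm) (hQpos : Q.PosDef) :
    lambdaMax ((1/2 : ℝ) • (Q * (S * Q) * Q⁻¹ + (S * Q)ᵀ)) = specAbscissa (S * Q) := by
  have hdet : IsUnit Q.det := isUnit_iff_ne_zero.mpr (ne_of_gt hQpos.det_pos)
  have hQinv : Q * Q⁻¹ = 1 := Matrix.mul_nonsing_inv Q hdet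
  have h1 : Q * (S * Q) * Q⁻¹ = Q * S := by
    rw [show Q * (S * Q) * Q⁻¹ = Q * S * (Q * Q⁻¹) by noncomm_ring, hQinv, Matrix.mul_one]
  have h2 : (S * Q)ᵀ = Q * S := by
    rw [Matrix.transpose_mul, hS.eq, hQ.eq]
  have hM : (1/2 : ℝ) • (Q * (S * Q) * Q⁻¹ + (S * Q)ᵀ) = Q * S := by
    rw [h1, h2, ← two_smul ℝ, smul_smul]; norm_num
  rw [hM]
  unfold lambdaMax specAbscissa
  congr 1
  have hmap : ∀ M N : Matrix (Fin n) (Fin n) ℝ,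
      (M * N).map (algebraMap ℝ ℂ) = M.map (algebraMap ℝ ℂ) * N.map (algebraMap ℝ ℂ) := by
    intro M N; exact Matrix.map_mul
  set Qm := Q.map (algebraMap ℝ ℂ) with hQm
  set Sm := S.map (algebraMap ℝ ℂ) with hSm
  have hdetm : IsUnit Qm.det := by
    have : Qm.det = algebraMap ℝ ℂ Q.det := by
      rw [hQm]
      exact ((algebraMap ℝ ℂ).map_det Q).symm
    rw [this]
    exact hdet.map _
  obtain ⟨u, hu⟩ := (Matrix.isUnit_iff_isUnit_det Qm).mpr hdetm
  have key : Qm * Sm = (↑u : Matrix (Fin n) (Fin n) ℂ) * (Sm * Qm) * (↑u⁻¹ : Matrix (Fin n) (Fin n) ℂ) := by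
    have h : (↑u : Matrix (Fin n) (Fin n) ℂ) * (↑u⁻¹ : Matrix (Fin n) (Fin n) ℂ) = 1 := u.mul_inv
    calc Qm * Sm = Qm * Sm * ((↑u : Matrix (Fin n) (Fin n) ℂ) * (↑u⁻¹ : Matrix (Fin n) (Fin n) ℂ)) := by
          rw [h, Matrix.mul_one]
    _ = (↑u : Matrix (Fin n) (Fin n) ℂ) * (Sm * Qm) * (↑u⁻¹ : Matrix (Fin n) (Fin n) ℂ) := by
          rw [hu]; noncomm_ring
  rw [hmap, hmap, key, spectrum.units_conjugate]
end

section
/- If W is a real symmetric negative definite n×n matrix, then for every d ∈ [0,1]^n the matrix diag(d)·W has only real, nonpositive eigenvalues, and its (−W)^{1/2}-weighted Euclidean log-norm is nonpositive: λ_max((−W)(diag(d)W)(−W)^{-1} + (diag(d)W)ᵀ) ≤ 0. -/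
open Matrix
open scoped ComplexOrder

/-- The complex spectrum of a complex PSD matrix consists of nonnegative reals. -/
lemma psd_spectrum_nonneg {n : ℕ} {A : Matrix (Fin n) (Fin n) ℂ} (hA : A.PosSemidef) :
    ∀ z ∈ spectrum ℂ A, z.im = 0 ∧ 0 ≤ z.re := by
  intro z hz
  have hspec : spectrum ℂ A = Set.range (fun i => (hA.1.eigenvalues i : ℂ)) := by
    conv_lhs => rw [hA.1.spectral_theorem]
    rw [Unitary.conjStarAlgAut_apply, Unitary.spectrum_star_right_conjugate, spectrum_diagonal]
    rfl
  rw [hspec] at hz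
  obtain ⟨i, hi⟩ := hz
  have h0 : 0 ≤ hA.1.eigenvalues i := hA.eigenvalues_nonneg i
  constructor
  · rw [← hi]; simp
  · rw [← hi]; simpa using h0

theorem negdef_case {n : ℕ} (W : Matrix (Fin n) (Fin n) ℝ)
    (hW : W.IsSymm) (hneg : (-W).PosDef)
    (d : Fin n → ℝ) (hd : ∀ i, d i ∈ Set.Icc (0:ℝ) 1) :
    (∀ z ∈ spectrum ℂ ((Matrix.diagonal d * W).map (algebraMap ℝ ℂ)),
        z.im = 0 ∧ z.re ≤ 0) ∧
    lambdaMax ((-W) * (Matrix.diagonal d * W) * (-W)⁻¹ + (Matrix.diagonal d * W)ᵀ) ≤ 0 := by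
  set φ : ℝ →+* ℂ := (algebraMap ℝ ℂ : ℝ →+* ℂ) with hφ
  set D : Matrix (Fin n) (Fin n) ℝ := Matrix.diagonal d with hD
  have hQsd : (-W).PosSemidef := hneg.posSemidef
  set S : Matrix (Fin n) (Fin n) ℝ := (open scoped MatrixOrder in CFC.sqrt (-W)) with hS
  have hSherm : S.IsHermitian := by
    open scoped MatrixOrder in exact (Matrix.nonneg_iff_posSemidef.mp (CFC.sqrt_nonneg _)).1
  have hSS : S * S = -W := by
    open scoped MatrixOrder in exact CFC.sqrt_mul_sqrt_self _ (Matrix.nonneg_iff_posSemidef.mpr hQsd)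
  -- S is invertible
  have hdetS : S.det ≠ 0 := by
    intro h
    have h1 : S.det * S.det = (-W).det := by rw [← Matrix.det_mul, hSS]
    have h2 := hneg.det_pos
    rw [← h1, h, mul_zero] at h2
    exact lt_irrefl _ h2
  -- complex versions
  set S' : Matrix (Fin n) (Fin n) ℂ := S.map φ with hS'
  set M : Matrix (Fin n) (Fin n) ℝ := S * D * S with hM
  set M' : Matrix (Fin n) (Fin n) ℂ := M.map φ with hM'
  have hUnitS' : IsUnit S' := by
    rw [Matrix.isUnit_iff_isUnit_det, hS', show S.map ⇑φ = φ.mapMatrix S from rfl, ← RingHom.map_det]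
    exact (isUnit_iff_ne_zero).mpr (by simpa [hφ] using hdetS)
  obtain ⟨u, hu⟩ := hUnitS'
  -- S' is hermitian
  have hS'herm : S'.IsHermitian :=
    hSherm.map ⇑φ (fun x => by simp [hφ, Complex.conj_ofReal])
  -- M' is PSD
  have hMpsd : M'.PosSemidef := by
    have hDpsd : (D.map φ).PosSemidef := by
      rw [hD, Matrix.diagonal_map (map_zero φ)]
      refine Matrix.posSemidef_diagonal_iff.mpr fun i => ?_
      simpa [hφ, Complex.zero_le_real] using (hd i).1
    have := hDpsd.conjTranspose_mul_mul_same S'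
    rw [hS'herm.eq] at this
    have heq : S' * D.map φ * S' = M' := by
      rw [hM', hM, hS']
      simp [Matrix.map_mul]
    rwa [heq] at this
  -- key identity 1: S * (D * W) = (-M) * S
  have key1 : S * (D * W) = (-M) * S := by
    have hW' : W = -(S * S) := by rw [hSS, neg_neg]
    rw [hM, hW']
    noncomm_ring
  have mapneg : ∀ A : Matrix (Fin n) (Fin n) ℝ, (-A).map ⇑φ = -(A.map ⇑φ) := by
    intro A; ext i j; simp [hφ]
  have key1' : S' * ((D * W).map φ) = (-M') * S' := by
    have h := congrArg (fun X : Matrix (Fin n) (Fin n) ℝ => X.map ⇑φ) key1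
    simp only [_root_.Matrix.map_mul, mapneg] at h
    show S.map ⇑φ * ((D * W).map ⇑φ) = -(M.map ⇑φ) * S.map ⇑φ
    simp only [_root_.Matrix.map_mul]
    exact h
  -- spectrum of (D*W).map φ equals spectrum of -M'
  have hconj : (D * W).map φ = (↑u⁻¹ : Matrix (Fin n) (Fin n) ℂ) * (-M') * u := by
    have h1 : (u : Matrix (Fin n) (Fin n) ℂ) * ((D * W).map φ)
        = (-M') * (u : Matrix (Fin n) (Fin n) ℂ) := by rw [hu]; exact key1'
    calc (D * W).map φ
        = (↑u⁻¹ : Matrix (Fin n) (Fin n) ℂ)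
            * ((u : Matrix (Fin n) (Fin n) ℂ) * ((D * W).map φ)) :=
          (u.inv_mul_cancel_left _).symm
      _ = (↑u⁻¹ : Matrix (Fin n) (Fin n) ℂ) * ((-M') * u) := by rw [h1]
      _ = (↑u⁻¹ : Matrix (Fin n) (Fin n) ℂ) * (-M') * u := by rw [mul_assoc]
  have hspec1 : spectrum ℂ ((D * W).map φ) = spectrum ℂ (-M') := by
    rw [hconj]; exact spectrum.units_conjugate'
  have part1 : ∀ z ∈ spectrum ℂ ((D * W).map φ), z.im = 0 ∧ z.re ≤ 0 := by
    intro z hz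
    rw [hspec1, ← spectrum.neg_eq, Set.mem_neg] at hz
    obtain ⟨him, hre⟩ := psd_spectrum_nonneg hMpsd _ hz
    constructor
    · simpa using him
    · simp only [Complex.neg_re] at hre; linarith
  refine ⟨part1, ?_⟩
  -- part 2
  have hQinv : (-W) * (-W)⁻¹ = 1 :=
    Matrix.mul_nonsing_inv _ ((Matrix.isUnit_iff_isUnit_det _).mp hneg.isUnit)
  have key2 : (-W) * (D * W) * (-W)⁻¹ + (D * W)ᵀ = (-(2:ℝ)) • ((-W) * D) := by
    have hl : (-W) * (D * W) * (-W)⁻¹ = -((-W) * D) := by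
      have h : (-W) * (D * W) = (-((-W) * D)) * (-W) := by noncomm_ring
      rw [h, mul_assoc, hQinv, mul_one]
    have ht : (D * W)ᵀ = -((-W) * D) := by
      rw [Matrix.transpose_mul, hW, hD, Matrix.diagonal_transpose]
      noncomm_ring
    rw [hl, ht, ← neg_add, ← two_smul ℝ, ← neg_smul]
  have hmap : ((-W) * (D * W) * (-W)⁻¹ + (D * W)ᵀ).map φ
      = (-(2:ℂ)) • (((-W) * D).map φ) := by
    rw [key2]
    ext i j
    simp [Matrix.map_apply, hφ]
  -- spectrum of ((-W)*D).map φ equals spectrum of M'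
  have key3 : S * M = ((-W) * D) * S := by
    rw [hM, ← hSS]; noncomm_ring
  have key3' : S' * M' = (((-W) * D).map φ) * S' := by
    have h := congrArg (fun X : Matrix (Fin n) (Fin n) ℝ => X.map ⇑φ) key3
    simp only [_root_.Matrix.map_mul, mapneg] at h
    show S.map ⇑φ * M.map ⇑φ = (((-W) * D).map ⇑φ) * S.map ⇑φ
    simp only [_root_.Matrix.map_mul, mapneg]
    exact h
  have hconj2 : ((-W) * D).map φ
      = (u : Matrix (Fin n) (Fin n) ℂ) * M' * (↑u⁻¹ : Matrix (Fin n) (Fin n) ℂ) := by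
    have h : (((-W) * D).map φ) * (u : Matrix (Fin n) (Fin n) ℂ)
        = (u : Matrix (Fin n) (Fin n) ℂ) * M' := by rw [hu]; exact key3'.symm
    calc ((-W) * D).map φ
        = (((-W) * D).map φ) * (u : Matrix (Fin n) (Fin n) ℂ)
            * (↑u⁻¹ : Matrix (Fin n) (Fin n) ℂ) :=
          (Units.mul_inv_cancel_right _ _).symm
      _ = (u : Matrix (Fin n) (Fin n) ℂ) * M' * (↑u⁻¹ : Matrix (Fin n) (Fin n) ℂ) := by rw [h]
  have hspec2 : spectrum ℂ (((-W) * D).map φ) = spectrum ℂ M' := by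
    rw [hconj2]; exact spectrum.units_conjugate
  -- conclude
  rw [lambdaMax]
  apply Real.sSup_le _ le_rfl
  rintro x ⟨z, hz, rfl⟩
  rw [show (algebraMap ℝ ℂ) = φ from rfl, hmap] at hz
  have c : ℂˣ := Units.mk0 (-(2:ℂ)) (by norm_num)
  rw [show (-(2:ℂ)) • (((-W) * D).map φ)
      = (Units.mk0 (-(2:ℂ)) (by norm_num) : ℂˣ) • (((-W) * D).map φ) from rfl,
    spectrum.unit_smul_eq_smul] at hz
  obtain ⟨w, hw, rfl⟩ := hz
  rw [hspec2] at hw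
  obtain ⟨him, hre⟩ := psd_spectrum_nonneg hMpsd _ hw
  simp only [Units.smul_def, Units.val_mk0, smul_eq_mul, Complex.mul_re, Complex.neg_re,
    Complex.neg_im, him]
  norm_num
  linarith
end

section
/- Let W be symmetric with α(W) > 0 and Q := U θ_{α(W)}(Λ) Uᵀ from its eigendecomposition. Then for every d ∈ [0,1]^n, Q² diag(d) W + W diag(d) Q² ⪯ 2α(W) Q², i.e., the Q-weighted Euclidean log-norm of diag(d)W is at most α(W). -/
open Matrix

lemma real_conjT {n : ℕ} (M : Matrix (Fin n) (Fin n) ℝ) : Mᴴ = Mᵀ := by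
  ext i j; simp [Matrix.conjTranspose_apply]

lemma psd_smul {n : ℕ} {M : Matrix (Fin n) (Fin n) ℝ} (hM : M.PosSemidef) {c : ℝ}
    (hc : 0 ≤ c) : (c • M).PosSemidef := by
  refine posSemidef_iff_dotProduct_mulVec.mpr ⟨?_, fun x => ?_⟩
  · simpa [Matrix.IsHermitian, Matrix.conjTranspose_smul] using
      congrArg (fun A => c • A) hM.1
  · have := (posSemidef_iff_dotProduct_mulVec.mp hM).2 x
    simp only [Matrix.smul_mulVec, dotProduct_smul, smul_eq_mul]
    exact mul_nonneg hc this

lemma psd_diag_nonneg {n : ℕ} {M : Matrix (Fin n) (Fin n) ℝ} (hM : M.PosSemidef)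
    (i : Fin n) : 0 ≤ M i i := by
  simpa using (posSemidef_iff_dotProduct_mulVec.mp hM).2 (Pi.single i 1)

lemma key_ncring {n : ℕ} (S D : Matrix (Fin n) (Fin n) ℝ) :
    (1+S)*(1+S) + (1+S)*(1+S) - (1+S)*(1+S)*D*(1-S*S) - (1-S*S)*D*((1+S)*(1+S)) =
      (1+S)*((1-D) + S*D*S)*(1+S) + (1+S)*((1-D) + S*D*S)*(1+S) := by
  noncomm_ring

theorem lognorm_bound_pos_case {n : ℕ}
    (W U Λ : Matrix (Fin n) (Fin n) ℝ) (a : ℝ)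
    (hW : W.IsSymm)
    (hU1 : U * Uᵀ = 1) (hU2 : Uᵀ * U = 1)
    (hΛ : Λ.IsDiag) (hdecomp : W = U * Λ * Uᵀ)
    -- a = α(W) is the maximum eigenvalue of W, and it is positive
    (ha_ub : (a • (1 : Matrix (Fin n) (Fin n) ℝ) - W).PosSemidef)
    (ha_eig : a ∈ spectrum ℝ W) (ha_pos : 0 < a)
    (Q : Matrix (Fin n) (Fin n) ℝ)
    (hQ : Q = U * Matrix.diagonal (fun i => theta a (Λ i i)) * Uᵀ)
    (d : Fin n → ℝ) (hd : ∀ i, d i ∈ Set.Icc (0:ℝ) 1) :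
    ((2 * a) • (Q * Q) -
      (Q * Q * Matrix.diagonal d * W + W * Matrix.diagonal d * (Q * Q))).PosSemidef := by
  classical
  set s : Fin n → ℝ := fun i => Real.sqrt (1 - Λ i i / a) with hs
  set S : Matrix (Fin n) (Fin n) ℝ := U * Matrix.diagonal s * Uᵀ with hSdef
  set D : Matrix (Fin n) (Fin n) ℝ := Matrix.diagonal d with hD
  -- eigenvalues are at most a
  have hconj : (a • (1 : Matrix (Fin n) (Fin n) ℝ) - Λ).PosSemidef := by
    have h1 := ha_ub.conjTranspose_mul_mul_same U
    have h2 : Uᴴ * (a • (1 : Matrix (Fin n) (Fin n) ℝ) - W) * U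
        = a • (1 : Matrix (Fin n) (Fin n) ℝ) - Λ := by
      rw [real_conjT, hdecomp]
      rw [Matrix.mul_sub, Matrix.sub_mul, Matrix.mul_smul, Matrix.smul_mul, Matrix.mul_one]
      rw [hU2]
      congr 1
      calc Uᵀ * (U * Λ * Uᵀ) * U = (Uᵀ * U) * Λ * (Uᵀ * U) := by
            simp only [Matrix.mul_assoc]
          _ = Λ := by rw [hU2]; simp
    rwa [h2] at h1
  have hlam : ∀ i, Λ i i ≤ a := by
    intro i
    have := psd_diag_nonneg hconj i
    simp [Matrix.smul_apply, Matrix.one_apply] at this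
    linarith
  have hssq : ∀ i, s i * s i = 1 - Λ i i / a := by
    intro i
    have h0 : 0 ≤ 1 - Λ i i / a := by
      have h1 : Λ i i / a ≤ 1 := (div_le_one ha_pos).mpr (hlam i)
      linarith
    rw [hs]
    exact Real.mul_self_sqrt h0
  -- S is symmetric
  have hSsymm : Sᵀ = S := by
    rw [hSdef]
    rw [Matrix.transpose_mul, Matrix.transpose_mul, Matrix.diagonal_transpose,
      Matrix.transpose_transpose, Matrix.mul_assoc]
  -- Λ is diagonal
  have hΛdiag : Λ = Matrix.diagonal (fun i => Λ i i) := (hΛ.diagonal_diag).symm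
  -- S * S
  have hSS : S * S = U * Matrix.diagonal (fun i => s i * s i) * Uᵀ := by
    rw [hSdef]
    calc (U * Matrix.diagonal s * Uᵀ) * (U * Matrix.diagonal s * Uᵀ)
        = U * Matrix.diagonal s * (Uᵀ * U) * Matrix.diagonal s * Uᵀ := by
          simp only [Matrix.mul_assoc]
      _ = U * (Matrix.diagonal s * Matrix.diagonal s) * Uᵀ := by
          rw [hU2]; simp only [Matrix.mul_one, Matrix.mul_assoc]
      _ = U * Matrix.diagonal (fun i => s i * s i) * Uᵀ := by
          rw [Matrix.diagonal_mul_diagonal]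
  -- W = a • (1 - S * S)
  have hW' : W = a • (1 - S * S) := by
    have h1 : (Matrix.diagonal fun i => s i * s i)
        = 1 - a⁻¹ • Matrix.diagonal (fun i => Λ i i) := by
      ext i j
      rcases eq_or_ne i j with rfl | hij
      · simp only [Matrix.diagonal_apply_eq, Matrix.sub_apply, Matrix.one_apply_eq,
          Matrix.smul_apply, smul_eq_mul, hssq i]
        field_simp
      · simp [Matrix.diagonal_apply_ne _ hij, Matrix.one_apply_ne hij]
    have h2 : U * (1 - a⁻¹ • Matrix.diagonal (fun i => Λ i i)) * Uᵀ
        = 1 - a⁻¹ • W := by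
      rw [Matrix.mul_sub, Matrix.sub_mul, Matrix.mul_one, hU1,
        Matrix.mul_smul, Matrix.smul_mul, ← hΛdiag, ← hdecomp]
    rw [hSS, h1, h2]
    rw [sub_sub_cancel, smul_smul, mul_inv_cancel₀ (ne_of_gt ha_pos), one_smul]
  -- Q = (2*a) • (1 + S)
  have hQ' : Q = (2 * a) • (1 + S) := by
    rw [hQ]
    have h2 : Matrix.diagonal (fun i => theta a (Λ i i))
        = (2 * a) • (1 + Matrix.diagonal s) := by
      ext i j
      rcases eq_or_ne i j with rfl | hij
      · simp [Matrix.diagonal_apply_eq, Matrix.one_apply_eq, theta, hs]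
      · simp [Matrix.diagonal_apply_ne _ hij, Matrix.one_apply_ne hij]
    rw [h2, Matrix.mul_smul, Matrix.smul_mul]
    rw [Matrix.mul_add, Matrix.add_mul, Matrix.mul_one, hU1, hSdef]
  -- the main identity
  have hQQ : Q * Q = (4 * a ^ 2) • ((1 + S) * (1 + S)) := by
    rw [hQ', smul_mul_smul_comm]
    congr 1; ring
  have key : (2 * a) • (Q * Q) - (Q * Q * D * W + W * D * (Q * Q))
      = (4 * a ^ 3) • ((1+S)*((1-D) + S*D*S)*(1+S) + (1+S)*((1-D) + S*D*S)*(1+S)) := by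
    rw [← key_ncring S D, hQQ, hW']
    simp only [Matrix.smul_mul, Matrix.mul_smul, smul_smul]
    module
  rw [key]
  have hMpsd : ((1 - D) + S*D*S).PosSemidef := by
    have h1 : (1 - D).PosSemidef := by
      have he : (1 : Matrix (Fin n) (Fin n) ℝ) - D
          = Matrix.diagonal (fun i => 1 - d i) := by
        ext i j
        rcases eq_or_ne i j with rfl | hij
        · simp [hD]
        · simp [hD, Matrix.diagonal_apply_ne _ hij, Matrix.one_apply_ne hij]
      rw [he]
      exact Matrix.posSemidef_diagonal_iff.mpr (fun i => by linarith [(hd i).2])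
    have h2 : (S*D*S).PosSemidef := by
      have hDpsd : D.PosSemidef :=
        Matrix.posSemidef_diagonal_iff.mpr (fun i => (hd i).1)
      have h3 := hDpsd.conjTranspose_mul_mul_same S
      rwa [real_conjT, hSsymm] at h3
    exact h1.add h2
  have hPpsd : ((1+S)*((1-D) + S*D*S)*(1+S)).PosSemidef := by
    have h1S : (1+S)ᴴ = 1+S := by
      rw [real_conjT, Matrix.transpose_add, Matrix.transpose_one, hSsymm]
    have h4 := hMpsd.conjTranspose_mul_mul_same (1+S)
    rwa [h1S] at h4
  exact psd_smul (hPpsd.add hPpsd) (by positivity : (0:ℝ) ≤ 4 * a ^ 3)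
end

section
/- Let W be symmetric, negative semidefinite (α(W) = 0), and ε > 0; let Q_ε := U θ_ε(Λ) Uᵀ. Then for every d ∈ [0,1]^n, Q_ε² diag(d) W + W diag(d) Q_ε² ⪯ 2ε Q_ε². -/
open Matrix

private lemma psd_smul_aux {n : ℕ} {A : Matrix (Fin n) (Fin n) ℝ} (h : A.PosSemidef)
    {c : ℝ} (hc : 0 ≤ c) : (c • A).PosSemidef := by
  refine .of_dotProduct_mulVec_nonneg ?_ fun x => ?_
  · have := h.1
    simp only [Matrix.IsHermitian] at this ⊢
    rw [conjTranspose_smul, this]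
    simp
  · rw [smul_mulVec, dotProduct_smul, smul_eq_mul]
    exact mul_nonneg hc (h.dotProduct_mulVec_nonneg x)

private lemma psd_tr_mul {n : ℕ} (A : Matrix (Fin n) (Fin n) ℝ) : (Aᵀ * A).PosSemidef := by
  simpa [conjTranspose_eq_transpose_of_trivial] using posSemidef_conjTranspose_mul_self A

private lemma psd_diag_nonneg_s11 {n : ℕ} {A : Matrix (Fin n) (Fin n) ℝ} (h : A.PosSemidef)
    (i : Fin n) : 0 ≤ A i i := by
  have := h.dotProduct_mulVec_nonneg (Pi.single i 1)
  simpa [mulVec_single, dotProduct_single, star_trivial, single_dotProduct] using this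

theorem lognorm_bound_semidef_case {n : ℕ}
    (W U Λ : Matrix (Fin n) (Fin n) ℝ) (ε : ℝ) (hε : 0 < ε)
    (hW : W.IsSymm) (hnsd : (-W).PosSemidef)
    (hU1 : U * Uᵀ = 1) (hU2 : Uᵀ * U = 1)
    (hΛ : Λ.IsDiag) (hdecomp : W = U * Λ * Uᵀ)
    (Q : Matrix (Fin n) (Fin n) ℝ)
    (hQ : Q = U * Matrix.diagonal (fun i => theta ε (Λ i i)) * Uᵀ)
    (d : Fin n → ℝ) (hd : ∀ i, d i ∈ Set.Icc (0:ℝ) 1) :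
    ((2 * ε) • (Q * Q) -
      (Q * Q * Matrix.diagonal d * W + W * Matrix.diagonal d * (Q * Q))).PosSemidef := by
  set T : Matrix (Fin n) (Fin n) ℝ := Matrix.diagonal (fun i => theta ε (Λ i i)) with hT
  set D : Matrix (Fin n) (Fin n) ℝ := Matrix.diagonal d with hD
  set E : Matrix (Fin n) (Fin n) ℝ :=
    Matrix.diagonal (fun i => Real.sqrt (d i * (1 - d i))) with hE
  -- Λ = Uᵀ W U
  have hΛW : Uᵀ * W * U = Λ := by
    rw [hdecomp]
    calc Uᵀ * (U * Λ * Uᵀ) * U = (Uᵀ * U) * Λ * (Uᵀ * U) := by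
          simp only [Matrix.mul_assoc]
        _ = Λ := by rw [hU2]; simp
  -- Λ i i ≤ 0
  have hnegΛ : (-Λ).PosSemidef := by
    have := hnsd.conjTranspose_mul_mul_same U
    simpa [conjTranspose_eq_transpose_of_trivial, Matrix.mul_neg, Matrix.neg_mul, hΛW]
      using this
  have hΛle : ∀ i, Λ i i ≤ 0 := by
    intro i
    have := psd_diag_nonneg_s11 hnegΛ i
    simpa using this
  -- scalar identity
  have htheta : ∀ i, theta ε (Λ i i) * theta ε (Λ i i) = 4 * ε * (theta ε (Λ i i) - Λ i i) := by
    intro i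
    have hnn : 0 ≤ 1 - Λ i i / ε := by
      have : Λ i i / ε ≤ 0 := div_nonpos_of_nonpos_of_nonneg (hΛle i) hε.le
      linarith
    have h1 : Real.sqrt (1 - Λ i i / ε) * Real.sqrt (1 - Λ i i / ε) = 1 - Λ i i / ε :=
      Real.mul_self_sqrt hnn
    have h1' : ε * (Real.sqrt (1 - Λ i i / ε) * Real.sqrt (1 - Λ i i / ε)) = ε - Λ i i := by
      rw [h1]; field_simp
    unfold theta
    linear_combination (4 * ε) * h1'
  have hTsq : T * T = (4 * ε) • (T - Λ) := by
    rw [hT, diagonal_mul_diagonal]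
    ext i j
    rcases eq_or_ne i j with rfl | hij
    · simp only [diagonal_apply_eq, Matrix.smul_apply, Matrix.sub_apply, smul_eq_mul]
      exact htheta i
    · simp [Matrix.smul_apply, Matrix.sub_apply, diagonal_apply_ne _ hij, hΛ hij]
  -- Q symmetric
  have hTt : Tᵀ = T := by rw [hT]; exact diagonal_transpose _
  have hQsymm : Qᵀ = Q := by
    rw [hQ]
    simp [Matrix.transpose_mul, hTt, Matrix.mul_assoc]
  -- Q² = 4ε(Q − W)
  have hQQ : Q * Q = (4 * ε) • (Q - W) := by
    rw [hQ]
    calc (U * T * Uᵀ) * (U * T * Uᵀ) = U * (T * ((Uᵀ * U) * T)) * Uᵀ := by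
          simp only [Matrix.mul_assoc]
        _ = U * (T * T) * Uᵀ := by rw [hU2]; simp
        _ = U * ((4 * ε) • (T - Λ)) * Uᵀ := by rw [hTsq]
        _ = (4 * ε) • (U * T * Uᵀ - U * Λ * Uᵀ) := by
          rw [Matrix.mul_smul, Matrix.smul_mul, Matrix.mul_sub, Matrix.sub_mul]
        _ = (4 * ε) • (U * T * Uᵀ - W) := by rw [← hdecomp]
  have hEE : E * E = D - D * D := by
    rw [hE, hD, diagonal_mul_diagonal, diagonal_mul_diagonal]
    ext i j
    rcases eq_or_ne i j with rfl | hij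
    · have h0 := (hd i).1
      have h1 := (hd i).2
      have hs : Real.sqrt (d i * (1 - d i)) * Real.sqrt (d i * (1 - d i)) = d i * (1 - d i) :=
        Real.mul_self_sqrt (mul_nonneg h0 (by linarith))
      simp only [diagonal_apply_eq, Matrix.sub_apply]
      rw [hs]; ring
    · simp [Matrix.sub_apply, diagonal_apply_ne _ hij]
  have hDt : Dᵀ = D := diagonal_transpose d
  have hEt : Eᵀ = E := diagonal_transpose _
  have hWt : Wᵀ = W := hW
  set A : Matrix (Fin n) (Fin n) ℝ := Q - (2:ℝ) • (D * W) with hA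
  have hAt : Aᵀ = Q - (2:ℝ) • (W * D) := by
    rw [hA, transpose_sub, transpose_smul, transpose_mul, hDt, hWt, hQsymm]
  set B : Matrix (Fin n) (Fin n) ℝ := E * W with hB
  have hBt : Bᵀ = W * E := by rw [hB, transpose_mul, hEt, hWt]
  have h2 : Q * Q * D * W + W * D * (Q * Q) =
      (4 * ε) • (Q * (D * W) + W * (D * Q)) - (8 * ε) • (W * (D * W)) := by
    rw [hQQ]
    simp only [Matrix.sub_mul, Matrix.mul_sub, Matrix.smul_mul, Matrix.mul_smul,
      smul_sub, smul_add, smul_smul, Matrix.mul_assoc]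
    module
  have key : (2 * ε) • (Q * Q) - (Q * Q * D * W + W * D * (Q * Q)) =
      (2 * ε) • (Aᵀ * A) + (8 * ε) • (Bᵀ * B) := by
    rw [h2, hAt, hA, hBt, hB]
    have hBB : (W * E) * (E * W) = W * (D - D * D) * W := by
      rw [← hEE]; simp only [Matrix.mul_assoc]
    rw [hBB]
    simp only [Matrix.sub_mul, Matrix.mul_sub, Matrix.add_mul, Matrix.mul_add,
      Matrix.smul_mul, Matrix.mul_smul, smul_smul, smul_sub, smul_add, Matrix.mul_assoc]
    module
  rw [key]
  exact (psd_smul_aux (psd_tr_mul A) (by linarith)).add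
    (psd_smul_aux (psd_tr_mul B) (by linarith))
end

section
/- If W is symmetric negative definite, then for every d ∈ [0,1]^n the Euclidean weighted log-norm μ_{2,(−W)^{1/2}}(−I + diag(d)W) ≤ −1; in LMI form: (−W)(−I + diag(d)W)(−W)^{-1} + (−I + diag(d)W)ᵀ ⪯ −2I. -/
open Matrix

open scoped ComplexOrder in
lemma fnn_dot_aux {m : ℕ} (y : Fin m → ℂ) :
    (star y ⬝ᵥ y).im = 0 ∧ 0 ≤ (star y ⬝ᵥ y).re ∧ (star y ⬝ᵥ y = 0 ↔ y = 0) := by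
  have h := dotProduct_star_self_nonneg y
  rw [Complex.le_def] at h
  refine ⟨?_, ?_, dotProduct_star_self_eq_zero⟩
  · simpa using h.2.symm
  · simpa using h.1

theorem fnn_contraction_negdef {n : ℕ} (W : Matrix (Fin n) (Fin n) ℝ)
    (hW : W.IsSymm) (hneg : (-W).PosDef)
    (d : Fin n → ℝ) (hd : ∀ i, d i ∈ Set.Icc (0:ℝ) 1) :
    ∀ z ∈ spectrum ℂ
        (((-W) * (-1 + Matrix.diagonal d * W) * (-W)⁻¹ +
          (-1 + Matrix.diagonal d * W)ᵀ).map (algebraMap ℝ ℂ)),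
      z.im = 0 ∧ z.re ≤ -2 := by
  intro z hz
  classical
  set f : ℝ →+* ℂ := (algebraMap ℝ ℂ) with hf
  have hdet : IsUnit (-W).det := isUnit_iff_ne_zero.mpr (ne_of_gt hneg.det_pos)
  -- simplify the matrix
  set A : Matrix (Fin n) (Fin n) ℝ := -1 + W * Matrix.diagonal d with hA
  have hswap : (-W) * (-1 + Matrix.diagonal d * W) = A * (-W) := by
    rw [hA]; noncomm_ring
  have h1 : (-W) * (-1 + Matrix.diagonal d * W) * (-W)⁻¹ = A := by
    rw [hswap, Matrix.mul_assoc, Matrix.mul_nonsing_inv _ hdet, Matrix.mul_one]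
  have h2 : (-1 + Matrix.diagonal d * W)ᵀ = A := by
    simp [hA, Matrix.transpose_add, Matrix.transpose_mul, Matrix.diagonal_transpose, hW.eq]
  rw [h1, h2] at hz
  -- eigenvector
  have hz' : Module.End.HasEigenvalue (Matrix.toLinAlgEquiv' ((A + A).map f)) z := by
    rw [Module.End.hasEigenvalue_iff_mem_spectrum, AlgEquiv.spectrum_eq]
    exact hz
  obtain ⟨v, hv⟩ := hz'.exists_hasEigenvector
  have hvne : v ≠ 0 := hv.2
  have hveq : ((A + A).map f) *ᵥ v = z • v := by
    rw [← Matrix.toLinAlgEquiv'_apply]; exact hv.apply_eq_smul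
  -- complex matrices
  set Wc : Matrix (Fin n) (Fin n) ℂ := W.map f with hWc
  set Dc : Matrix (Fin n) (Fin n) ℂ := Matrix.diagonal (fun i => (d i : ℂ)) with hDc
  have hdiagmap : (Matrix.diagonal d).map f = Dc := by
    rw [Matrix.diagonal_map (map_zero f), hDc]
    congr 1
  have hAmap : A.map f = -1 + Wc * Dc := by
    rw [hA, ← RingHom.mapMatrix_apply, map_add, map_neg, _root_.map_one, _root_.map_mul,
      RingHom.mapMatrix_apply, RingHom.mapMatrix_apply, hdiagmap, hWc]
  set μ : ℂ := (z + 2) / 2 with hμ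
  have hkey : (Wc * Dc) *ᵥ v = μ • v := by
    have h3 : (A + A).map f = A.map f + A.map f := Matrix.map_add (f := f) (map_add f) A A
    rw [h3, hAmap] at hveq
    funext i
    have hcomp := congrFun hveq i
    simp only [Matrix.add_mulVec, Matrix.neg_mulVec, Matrix.one_mulVec, Pi.add_apply,
      Pi.neg_apply, Pi.smul_apply, smul_eq_mul] at hcomp ⊢
    rw [hμ]
    field_simp
    linear_combination hcomp
  -- square root diagonal
  set S : Matrix (Fin n) (Fin n) ℂ := Matrix.diagonal (fun i => ((Real.sqrt (d i) : ℝ) : ℂ)) with hS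
  have hSS : S * S = Dc := by
    have he : (fun i => ((Real.sqrt (d i) : ℝ) : ℂ) * ((Real.sqrt (d i) : ℝ) : ℂ))
        = fun i => ((d i : ℝ) : ℂ) := by
      funext i
      rw [← Complex.ofReal_mul, Real.mul_self_sqrt (hd i).1]
    rw [hS, hDc, Matrix.diagonal_mul_diagonal, he]
  have hSH : Sᴴ = S := by
    rw [hS, Matrix.diagonal_conjTranspose]
    have hstar : (star fun i => ((Real.sqrt (d i) : ℝ) : ℂ))
        = fun i => ((Real.sqrt (d i) : ℝ) : ℂ) := by
      funext i
      rw [Pi.star_apply, Complex.star_def, Complex.conj_ofReal]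
    rw [hstar]
  set w : Fin n → ℂ := S *ᵥ v with hw
  -- main claim about μ
  have hmain : μ.im = 0 ∧ μ.re ≤ 0 := by
    by_cases hw0 : w = 0
    · have hDv : Dc *ᵥ v = 0 := by
        rw [← hSS, ← Matrix.mulVec_mulVec, ← hw, hw0, Matrix.mulVec_zero]
      have h0 : μ • v = 0 := by
        rw [← hkey, ← Matrix.mulVec_mulVec, hDv, Matrix.mulVec_zero]
      rcases smul_eq_zero.mp h0 with h | h
      · simp [h]
      · exact absurd h hvne
    · have hHw : (S * Wc * S) *ᵥ w = μ • w := by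
        have h5 : (S * Wc * S) *ᵥ w = S *ᵥ ((Wc * Dc) *ᵥ v) := by
          rw [hw, Matrix.mulVec_mulVec, Matrix.mulVec_mulVec]
          congr 1
          simp only [Matrix.mul_assoc]
          rw [hSS]
        rw [h5, hkey, Matrix.mulVec_smul, hw]
      set t : ℂ := star w ⬝ᵥ w with ht
      obtain ⟨htim, htre0, htzero⟩ := fnn_dot_aux w
      have htne : t ≠ 0 := fun h => hw0 (htzero.mp h)
      have htre : 0 < t.re := by
        rcases lt_or_eq_of_le htre0 with h | h
        · exact h
        · exact absurd (Complex.ext h.symm htim) htne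
      set c : ℂ := star w ⬝ᵥ ((S * Wc * S) *ᵥ w) with hc
      have hcmu : c = μ * t := by
        rw [hc, hHw, dotProduct_smul, ht, smul_eq_mul]
      -- factor -W = Bᴴ * B
      obtain ⟨B, hB⟩ : ∃ B : Matrix (Fin n) (Fin n) ℝ, -W = Bᴴ * B := by
        open scoped MatrixOrder in
        obtain ⟨B, hB⟩ := CStarAlgebra.nonneg_iff_eq_star_mul_self.mp hneg.posSemidef.nonneg
        exact ⟨B, hB⟩
      set Bc : Matrix (Fin n) (Fin n) ℂ := B.map f with hBc
      have hsemiconj : Function.Semiconj (f : ℝ → ℂ) star star := by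
        intro x
        simp [hf, Complex.conj_ofReal]
      have hBmap : (-W).map f = Bcᴴ * Bc := by
        rw [hB, ← RingHom.mapMatrix_apply, _root_.map_mul, RingHom.mapMatrix_apply,
          RingHom.mapMatrix_apply, Matrix.conjTranspose_map f hsemiconj, hBc]
      have hWcneg : Wc = -(Bcᴴ * Bc) := by
        rw [← hBmap, hWc, ← RingHom.mapMatrix_apply, ← RingHom.mapMatrix_apply, ← map_neg,
          neg_neg]
      set y : Fin n → ℂ := (Bc * S) *ᵥ w with hy
      have hnegc : -c = star y ⬝ᵥ y := by
        rw [hc, hWcneg]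
        have h6 : S * -(Bcᴴ * Bc) * S = -((Bc * S)ᴴ * (Bc * S)) := by
          rw [Matrix.conjTranspose_mul, hSH]
          simp only [Matrix.neg_mul, Matrix.mul_neg]
          rw [Matrix.mul_assoc, Matrix.mul_assoc, Matrix.mul_assoc]
        rw [h6, Matrix.neg_mulVec, dotProduct_neg, neg_neg, hy,
          ← Matrix.mulVec_mulVec, Matrix.dotProduct_mulVec, ← Matrix.star_mulVec,
          Matrix.mulVec_mulVec]
      obtain ⟨hyim, hyre, -⟩ := fnn_dot_aux y
      rw [← hnegc] at hyim hyre
      have hcim : c.im = 0 := by simpa using hyim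
      have hcre : c.re ≤ 0 := by
        simp only [Complex.neg_re] at hyre; linarith
      -- extract μ facts
      have him : μ.im * t.re = 0 := by
        have h7 := congrArg Complex.im hcmu
        rw [Complex.mul_im, htim, hcim] at h7
        linarith [h7]
      have hre : μ.re * t.re ≤ 0 := by
        have h8 := congrArg Complex.re hcmu
        rw [Complex.mul_re, htim] at h8
        nlinarith [hcre]
      constructor
      · rcases mul_eq_zero.mp him with h | h
        · exact h
        · linarith
      · by_contra hcon
        push_neg at hcon
        nlinarith
  -- conclude
  have hz2 : z = 2 * μ - 2 := by rw [hμ]; ring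
  rw [hz2]
  constructor
  · simp [Complex.sub_im, Complex.mul_im, hmain.1]
  · simp only [Complex.sub_re, Complex.mul_re]
    norm_num [hmain.1]
    nlinarith [hmain.2]
end

section
/- If W is symmetric with α(W) > 0, Q := U θ_{α(W)}(Λ) Uᵀ and P := Q²/(4α(W)), then W = Q − P and for every d with 0 < d ≤ 1 componentwise, the block matrix [[2α(W)P, −Q diag(d) P],[−P diag(d) Q, 2 P diag(d) P]] is positive semidefinite. -/
open Matrix

lemma theta_splitting {a z : ℝ} (ha : 0 < a) (hz : z ≤ a) :
    theta a z - 1 / (4 * a) * (theta a z * theta a z) = z := by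
  have h0 : 0 ≤ 1 - z / a := by
    rw [sub_nonneg, div_le_one ha]; exact hz
  set s := Real.sqrt (1 - z / a) with hsdef
  have hs : s * s = 1 - z / a := Real.mul_self_sqrt h0
  have key : a * (1 - s * s) = z := by
    rw [hs]; field_simp; ring
  unfold theta
  rw [← hsdef]
  rw [← key]
  field_simp
  ring

lemma quad_psd {u v d : ℝ} (hd0 : 0 < d) (hd1 : d ≤ 1) :
    0 ≤ 1 / 2 * (u * u) - 2 * (d * (u * v)) + 2 * (d * (v * v)) := by
  nlinarith [sq_nonneg (u - 2 * d * v),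
    mul_nonneg (mul_nonneg hd0.le (sub_nonneg.2 hd1)) (sq_nonneg v)]

theorem splitting_and_schur_psd {n : ℕ}
    (W U Λ : Matrix (Fin n) (Fin n) ℝ) (a : ℝ)
    (hW : W.IsSymm)
    (hU1 : U * Uᵀ = 1) (hU2 : Uᵀ * U = 1)
    (hΛ : Λ.IsDiag) (hdecomp : W = U * Λ * Uᵀ)
    (ha_ub : (a • (1 : Matrix (Fin n) (Fin n) ℝ) - W).PosSemidef)
    (ha_eig : a ∈ spectrum ℝ W) (ha_pos : 0 < a)
    (Q P : Matrix (Fin n) (Fin n) ℝ)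
    (hQ : Q = U * Matrix.diagonal (fun i => theta a (Λ i i)) * Uᵀ)
    (hP : P = (1 / (4 * a)) • (Q * Q)) :
    W = Q - P ∧
    ∀ d : Fin n → ℝ, (∀ i, 0 < d i ∧ d i ≤ 1) →
      (Matrix.fromBlocks
        ((2 * a) • P) (-(Q * Matrix.diagonal d * P))
        (-(P * Matrix.diagonal d * Q)) ((2 : ℝ) • (P * Matrix.diagonal d * P))).PosSemidef := by
  -- eigenvalues bounded by a
  have heig : ∀ i, Λ i i ≤ a := by
    intro i
    have hx := ha_ub.dotProduct_mulVec_nonneg (fun j => U j i)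
    have hWU : W * U = U * Λ := by
      rw [hdecomp, Matrix.mul_assoc, hU2, Matrix.mul_one]
    have hmv : W *ᵥ (fun j => U j i) = fun j => Λ i i * U j i := by
      funext j
      have h2 : (W * U) j i = (U * Λ) j i := by rw [hWU]
      simp only [mul_apply] at h2
      calc (W *ᵥ fun j => U j i) j = ∑ k, W j k * U k i := rfl
        _ = ∑ k, U j k * Λ k i := h2
        _ = U j i * Λ i i := by
            rw [Finset.sum_eq_single i]
            · intro k _ hk; rw [hΛ hk, mul_zero]
            · intro h; exact absurd (Finset.mem_univ i) h
        _ = Λ i i * U j i := mul_comm _ _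
    have hnorm : ∑ j, U j i * U j i = 1 := by
      have h3 : (Uᵀ * U) i i = (1 : Matrix (Fin n) (Fin n) ℝ) i i := by rw [hU2]
      simpa [mul_apply, transpose_apply] using h3
    rw [sub_mulVec, hmv] at hx
    simp only [star_trivial, smul_mulVec, one_mulVec, dotProduct_sub, dotProduct_smul,
      smul_eq_mul, dotProduct] at hx
    have e : ∀ g : (Fin n → ℝ), True := fun _ => trivial
    have h1 : ∑ j, U j i * (Λ i i * U j i) = Λ i i := by
      have : ∀ j, U j i * (Λ i i * U j i) = Λ i i * (U j i * U j i) := fun j => by ring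
      simp_rw [this, ← Finset.mul_sum, hnorm, mul_one]
    have h2 : ∑ j, U j i * ((a • fun j => U j i) - fun j => Λ i i * U j i) j = a - Λ i i := by
      have : ∀ j, U j i * ((a • fun j => U j i) - fun j => Λ i i * U j i) j
          = a * (U j i * U j i) - U j i * (Λ i i * U j i) := fun j => by
        simp [Pi.sub_apply, Pi.smul_apply, smul_eq_mul]; ring
      rw [Finset.sum_congr rfl (fun j _ => this j), Finset.sum_sub_distrib,
        ← Finset.mul_sum, hnorm, h1, mul_one]
    rw [h2] at hx
    linarith
  have ha_ne : a ≠ 0 := ne_of_gt ha_pos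
  -- symmetry of Q and P
  have hQs : Qᵀ = Q := by
    rw [hQ]
    simp [transpose_mul, diagonal_transpose, Matrix.mul_assoc]
  have hPs : Pᵀ = P := by
    rw [hP, transpose_smul, transpose_mul, hQs]
  have hcancel : ∀ X : Matrix (Fin n) (Fin n) ℝ, Uᵀ * (U * X) = X := fun X => by
    rw [← Matrix.mul_assoc, hU2, Matrix.one_mul]
  set f : Fin n → ℝ := fun i => theta a (Λ i i) with hf
  have hQQ : Q * Q = U * (Matrix.diagonal (fun i => f i * f i) * Uᵀ) := by
    rw [hQ]
    simp only [Matrix.mul_assoc, hcancel]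
    rw [← Matrix.mul_assoc (Matrix.diagonal f), diagonal_mul_diagonal]
  -- the splitting
  have hsplit : W = Q - P := by
    have hQ' : Q = U * (Matrix.diagonal f * Uᵀ) := by rw [hQ, Matrix.mul_assoc]
    have hPd : P = U * (Matrix.diagonal (fun i => 1 / (4 * a) * (f i * f i)) * Uᵀ) := by
      rw [hP, hQQ, ← Matrix.mul_smul, ← Matrix.smul_mul, ← Matrix.diagonal_smul]
      rfl
    rw [hQ', hPd, ← Matrix.mul_sub, ← Matrix.sub_mul, diagonal_sub]
    have hdd : (Matrix.diagonal fun i => f i - 1 / (4 * a) * (f i * f i)) = Λ := by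
      have h4 : (fun i => f i - 1 / (4 * a) * (f i * f i)) = fun i => Λ i i := by
        funext i; exact theta_splitting ha_pos (heig i)
      rw [h4]
      exact hΛ.diagonal_diag
    rw [hdd, hdecomp, Matrix.mul_assoc]
  refine ⟨hsplit, ?_⟩
  intro d hd
  set D : Matrix (Fin n) (Fin n) ℝ := Matrix.diagonal d with hD
  -- the inner matrix K is PSD
  have hK : (Matrix.fromBlocks ((1/2 : ℝ) • (1 : Matrix (Fin n) (Fin n) ℝ)) (-D) (-D)
      ((2 : ℝ) • D)).PosSemidef := by
    refine Matrix.PosSemidef.of_dotProduct_mulVec_nonneg ?_ ?_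
    · show _ᴴ = _
      rw [fromBlocks_conjTranspose]
      simp [hD, diagonal_conjTranspose]
    · intro z
      have hz : z = Sum.elim (z ∘ Sum.inl) (z ∘ Sum.inr) := (Sum.elim_comp_inl_inr z).symm
      set u := z ∘ Sum.inl with hu
      set v := z ∘ Sum.inr with hv
      rw [star_trivial, hz, fromBlocks_mulVec, sumElim_dotProduct_sumElim]
      simp only [Sum.elim_comp_inl, Sum.elim_comp_inr]
      have hexp : u ⬝ᵥ (((1/2 : ℝ) • (1 : Matrix (Fin n) (Fin n) ℝ)) *ᵥ u + (-D) *ᵥ v) +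
          v ⬝ᵥ ((-D) *ᵥ u + ((2 : ℝ) • D) *ᵥ v) =
          ∑ i, (1 / 2 * (u i * u i) - 2 * (d i * (u i * v i)) + 2 * (d i * (v i * v i))) := by
        simp only [dotProduct_add, neg_mulVec, dotProduct_neg, smul_mulVec, one_mulVec,
          dotProduct_smul, smul_eq_mul, dotProduct, hD, mulVec_diagonal, Finset.mul_sum,
          ← Finset.sum_add_distrib, ← Finset.sum_sub_distrib]
        apply Finset.sum_congr rfl; intro i _
        simp only [Pi.add_apply, Pi.sub_apply, Pi.neg_apply, Pi.smul_apply, smul_eq_mul,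
          mulVec_diagonal]
        ring
      rw [hexp]
      exact Finset.sum_nonneg fun i _ => quad_psd (hd i).1 (hd i).2
  -- express the block matrix as a congruence of K
  have hQH : Qᴴ = Q := by
    have h5 : Qᴴ = Qᵀ := by ext i j; simp [conjTranspose_apply]
    rw [h5, hQs]
  have hPH : Pᴴ = P := by
    have h5 : Pᴴ = Pᵀ := by ext i j; simp [conjTranspose_apply]
    rw [h5, hPs]
  have hL : (Matrix.fromBlocks Q 0 0 P)ᴴ = Matrix.fromBlocks Q 0 0 P := by
    rw [fromBlocks_conjTranspose, hQH, hPH]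
    simp
  have hc : 2 * a * (1 / (4 * a)) = 1 / 2 := by field_simp; ring
  have hM : Matrix.fromBlocks
        ((2 * a) • P) (-(Q * Matrix.diagonal d * P))
        (-(P * Matrix.diagonal d * Q)) ((2 : ℝ) • (P * Matrix.diagonal d * P)) =
      (Matrix.fromBlocks Q 0 0 P)ᴴ *
        (Matrix.fromBlocks ((1/2 : ℝ) • (1 : Matrix (Fin n) (Fin n) ℝ)) (-D) (-D) ((2 : ℝ) • D)) *
        (Matrix.fromBlocks Q 0 0 P) := by
    rw [hL, fromBlocks_multiply, fromBlocks_multiply, hP]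
    simp only [Matrix.zero_mul, Matrix.mul_zero, add_zero, zero_add, Matrix.mul_neg,
      Matrix.neg_mul, Matrix.smul_mul, Matrix.mul_smul, Matrix.mul_one, Matrix.mul_assoc,
      smul_smul, hc, hD]
    norm_num
    refine ⟨?_, ?_, ?_⟩
    · rw [Matrix.mul_assoc]
    · rw [Matrix.mul_assoc, Matrix.mul_assoc]
    · rw [smul_smul, Matrix.mul_assoc, Matrix.mul_assoc]
      congr 1
      ring
  rw [hM]
  exact hK.conjTranspose_mul_mul_same _
end
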